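/- arXiv:1507.03896 — 2 statements merged into one kernel-verified Lean document; each statement's English description precedes it below -/
import Mathlib

section
/- Let f, g be two nonzero vectors in a complex (or real) inner product space with f ≠ ±g after normalization, and define f_t = (1-t)g + t f for t ∈ [0,1], assumed nonzero for all t. Then the norm of the derivative of the normalized path t ↦ f_t/‖f_t‖ satisfies ‖(d/dt)(f_t/‖f_t‖)‖ ≤ ‖f‖·‖g‖/‖f_t‖². -/
open scoped RealInnerProductSpace

lemma aux_hasDerivAt_norm {H : Type*} [NormedAddCommGroup H] [InnerProductSpace ℝ H]
    {γ : ℝ → H} {v : H} {t : ℝ} (h : HasDerivAt γ v t) (h0 : γ t ≠ 0) :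
    HasDerivAt (fun s => ‖γ s‖) (⟪γ t, v⟫ / ‖γ t‖) t := by
  have h1 : HasDerivAt (fun s => ‖γ s‖ ^ 2) (2 * ⟪γ t, v⟫) t := h.norm_sq
  have h2 : (‖γ t‖ ^ 2 : ℝ) ≠ 0 := pow_ne_zero 2 (norm_ne_zero_iff.mpr h0)
  have h3 := (Real.hasDerivAt_sqrt h2).comp t h1
  have h4 : (fun s => Real.sqrt (‖γ s‖ ^ 2)) = fun s => ‖γ s‖ := by
    funext s; exact Real.sqrt_sq (norm_nonneg _)
  have h5 : Real.sqrt (‖γ t‖ ^ 2) = ‖γ t‖ := Real.sqrt_sq (norm_nonneg _)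
  rw [Function.comp_def, h4, h5] at h3
  have hn : ‖γ t‖ ≠ 0 := norm_ne_zero_iff.mpr h0
  refine h3.congr_deriv ?_
  field_simp

lemma aux_key {H : Type*} [NormedAddCommGroup H] [InnerProductSpace ℝ H]
    (f g : H) (t : ℝ) :
    ‖(1 - t) • g + t • f‖ ^ 2 * ‖f - g‖ ^ 2 - ⟪(1 - t) • g + t • f, f - g⟫ ^ 2
      = ‖f‖ ^ 2 * ‖g‖ ^ 2 - ⟪f, g⟫ ^ 2 := by
  simp only [← real_inner_self_eq_norm_sq, inner_add_left, inner_add_right,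
    inner_sub_left, inner_sub_right, real_inner_smul_left, real_inner_smul_right,
    real_inner_comm g f]
  ring

/- STATEMENT 5: Let f, g be nonzero vectors in a (finite-dimensional real or complex) inner
product space, with f ≠ ±g after normalization, and f_t = (1-t)g + tf nonzero for t ∈ [0,1].
Then ‖(d/dt)(f_t/‖f_t‖)‖ ≤ ‖f‖‖g‖/‖f_t‖². -/
theorem stmt_5 {H : Type*} [NormedAddCommGroup H] [InnerProductSpace ℝ H]
    [FiniteDimensional ℝ H] (f g : H) (hf : f ≠ 0) (hg : g ≠ 0)
    (hfg : ‖f‖⁻¹ • f ≠ ‖g‖⁻¹ • g) (hfg' : ‖f‖⁻¹ • f ≠ -(‖g‖⁻¹ • g))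
    (c : ℝ → H) (hc : ∀ t, c t = (1 - t) • g + t • f)
    (hne : ∀ t ∈ Set.Icc (0 : ℝ) 1, c t ≠ 0) :
    ∀ t ∈ Set.Icc (0 : ℝ) 1,
      ‖deriv (fun τ => ‖c τ‖⁻¹ • c τ) t‖ ≤ ‖f‖ * ‖g‖ / ‖c t‖ ^ 2 := by
  intro t ht
  have hct : c t ≠ 0 := hne t ht
  set v : H := f - g with hv
  -- derivative of c
  have hd0 : HasDerivAt (fun s : ℝ => g + s • v) v t := by
    simpa using ((hasDerivAt_id t).smul_const v).const_add g
  have hd : HasDerivAt c v t := by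
    refine hd0.congr_of_eventuallyEq (Filter.Eventually.of_forall fun s => ?_)
    rw [hc]; module
  have hnc : (0 : ℝ) < ‖c t‖ := norm_pos_iff.mpr hct
  have hnormd : HasDerivAt (fun s => ‖c s‖) (⟪c t, v⟫ / ‖c t‖) t :=
    aux_hasDerivAt_norm hd hct
  have hinv : HasDerivAt (fun s => ‖c s‖⁻¹) (-(⟪c t, v⟫ / ‖c t‖) / ‖c t‖ ^ 2) t :=
    hnormd.inv (ne_of_gt hnc)
  have hφ : HasDerivAt (fun τ => ‖c τ‖⁻¹ • c τ)
      ((-(⟪c t, v⟫ / ‖c t‖) / ‖c t‖ ^ 2) • c t + ‖c t‖⁻¹ • v) t := (hinv.smul hd).congr_deriv (add_comm _ _)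
  rw [hφ.deriv]
  set a : ℝ := -(⟪c t, v⟫ / ‖c t‖) / ‖c t‖ ^ 2 with ha
  set D : H := a • c t + ‖c t‖⁻¹ • v with hD
  -- compute ‖D‖^2
  have hD2 : ‖D‖ ^ 2 = a ^ 2 * ⟪c t, c t⟫ + 2 * a * ‖c t‖⁻¹ * ⟪c t, v⟫
      + (‖c t‖⁻¹) ^ 2 * ⟪v, v⟫ := by
    rw [← real_inner_self_eq_norm_sq, hD]
    simp only [inner_add_left, inner_add_right, real_inner_smul_left,
      real_inner_smul_right, real_inner_comm v (c t)]
    ring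
  have hcc : ⟪c t, c t⟫ = ‖c t‖ ^ 2 := real_inner_self_eq_norm_sq _
  have hvv : ⟪v, v⟫ = ‖v‖ ^ 2 := real_inner_self_eq_norm_sq _
  have hD2' : ‖D‖ ^ 2 = (‖c t‖ ^ 2 * ‖v‖ ^ 2 - ⟪c t, v⟫ ^ 2) / ‖c t‖ ^ 4 := by
    rw [hD2, hcc, hvv, ha]
    field_simp
    ring
  have hkey : ‖c t‖ ^ 2 * ‖v‖ ^ 2 - ⟪c t, v⟫ ^ 2 = ‖f‖ ^ 2 * ‖g‖ ^ 2 - ⟪f, g⟫ ^ 2 := by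
    rw [hc t]; exact aux_key f g t
  have hle : ‖D‖ ^ 2 ≤ (‖f‖ * ‖g‖ / ‖c t‖ ^ 2) ^ 2 := by
    rw [hD2', hkey, div_pow]
    have h4 : (0:ℝ) < ‖c t‖ ^ 4 := by positivity
    rw [div_le_div_iff₀ h4 (by positivity)]
    have : ((‖c t‖ ^ 2) ^ 2 : ℝ) = ‖c t‖ ^ 4 := by ring
    nlinarith [sq_nonneg (⟪f, g⟫ : ℝ), sq_nonneg (‖c t‖ ^ 2)]
  have hR : (0:ℝ) ≤ ‖f‖ * ‖g‖ / ‖c t‖ ^ 2 := by positivity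
  nlinarith [norm_nonneg D, hle, hR]
end

section
/- Let f ∈ S be a unit-norm polynomial system and ζ ∈ ℙ(ℂ^{n+1}) a zero of f at which Df(ζ)|_{ζ^⊥} is invertible. For a tangent direction ḟ define ζ̇(ḟ) = (Df(ζ)|_{ζ^⊥})^{-1} ḟ(ζ). Then the average of ‖ζ̇(ḟ)‖² over ḟ uniform on the unit sphere of T_f S equals (N - 1/2)^{-1}·‖(Df(ζ)|_{ζ^⊥})^{-1}‖_F². -/
open MeasureTheory

section Aux
open Metric Set
open scoped Pointwise

noncomputable section

/-- Shorthand for Euclidean space. -/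
abbrev Em' (m : ℕ) := EuclideanSpace ℝ (Fin m)
/-- Its unit sphere. -/
abbrev Sm' (m : ℕ) := sphere (0 : Em' m) 1
/-- The cone measure on the sphere. -/
abbrev σm' (m : ℕ) : Measure (Sm' m) := (volume : Measure (Em' m)).toSphere

variable {m p a b : ℕ}

/-- The map induced on the unit sphere by a linear isometry. -/
def sphereMap' (T : Em' m ≃ₗᵢ[ℝ] Em' m) (u : Sm' m) : Sm' m :=
  ⟨T u, by simp [mem_sphere_zero_iff_norm, mem_sphere_zero_iff_norm.1 u.2]⟩

lemma continuous_sphereMap' (T : Em' m ≃ₗᵢ[ℝ] Em' m) : Continuous (sphereMap' T) :=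
  (T.continuous.comp continuous_subtype_val).subtype_mk _

lemma map_sphereMap' (T : Em' m ≃ₗᵢ[ℝ] Em' m) :
    Measure.map (sphereMap' T) (σm' m) = σm' m := by
  refine Measure.ext fun s hs => ?_
  rw [Measure.map_apply (continuous_sphereMap' T).measurable hs]
  rw [Measure.toSphere_apply' _ ((continuous_sphereMap' T).measurable hs),
    Measure.toSphere_apply' _ hs]
  have h1 : ((↑) '' (sphereMap' T ⁻¹' s) : Set (Em' m)) = ⇑T ⁻¹' ((↑) '' s) := by
    ext x
    constructor
    · rintro ⟨u, hu, rfl⟩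
      exact ⟨sphereMap' T u, hu, rfl⟩
    · rintro ⟨v, hv, hvx⟩
      have hx : x ∈ Sm' m := by
        have : ‖T x‖ = 1 := by rw [← hvx]; exact mem_sphere_zero_iff_norm.1 v.2
        simpa [mem_sphere_zero_iff_norm] using this
      refine ⟨⟨x, hx⟩, ?_, rfl⟩
      have : sphereMap' T ⟨x, hx⟩ = v := Subtype.ext hvx.symm
      rw [mem_preimage, this]; exact hv
  rw [h1]
  have h2 : Ioo (0:ℝ) 1 • (⇑T ⁻¹' ((↑) '' s)) = ⇑T ⁻¹' (Ioo (0:ℝ) 1 • ((↑) '' s)) := by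
    ext x
    simp only [Set.mem_smul, mem_preimage]
    constructor
    · rintro ⟨r, hr, y, hy, rfl⟩
      exact ⟨r, hr, T y, hy, (T.map_smul r y).symm⟩
    · rintro ⟨r, hr, b, hb, hbx⟩
      refine ⟨r, hr, T.symm b, by simpa using hb, ?_⟩
      apply T.injective
      rw [T.map_smul]
      simp [hbx]
  rw [h2]
  congr 1
  let Te := T.toHomeomorph.toMeasurableEquiv
  have hTe : Measure.map Te volume = volume := T.measurePreserving.map_eq
  have h : ⇑T ⁻¹' (Ioo (0:ℝ) 1 • ((↑) '' s)) = ⇑Te ⁻¹' (Ioo (0:ℝ) 1 • ((↑) '' s)) := rfl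
  rw [h, ← MeasurableEquiv.map_apply Te, hTe]

lemma integral_comp_sphereMap' (T : Em' m ≃ₗᵢ[ℝ] Em' m) (g : Sm' m → ℝ)
    (hg : AEStronglyMeasurable g (σm' m)) :
    ∫ u, g (sphereMap' T u) ∂(σm' m) = ∫ u, g u ∂(σm' m) := by
  conv_rhs => rw [← map_sphereMap' T]
  rw [integral_map (continuous_sphereMap' T).measurable.aemeasurable]
  rw [map_sphereMap' T]
  exact hg

lemma cont_coord' (k : Fin m) : Continuous (fun u : Sm' m => (u : Em' m) k) :=
  ((continuous_apply k).comp (PiLp.continuous_ofLp 2 (fun _ : Fin m => ℝ))).comp continuous_subtype_val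

lemma integrable_cont' {g : Sm' m → ℝ} (hg : Continuous g) : Integrable g (σm' m) := by
  have : CompactSpace (Sm' m) := Metric.sphere.compactSpace _ _
  exact hg.integrable_of_hasCompactSupport (HasCompactSupport.of_compactSpace g)

/-- Sign flip of one coordinate, as a linear isometry. -/
def flipAt' (k : Fin m) : Em' m ≃ₗᵢ[ℝ] Em' m :=
  LinearIsometryEquiv.piLpCongrRight 2
    (fun i => if i = k then LinearIsometryEquiv.neg ℝ else LinearIsometryEquiv.refl ℝ ℝ)

lemma flipAt_apply' (k : Fin m) (x : Em' m) (i : Fin m) :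
    (flipAt' k x) i = if i = k then -(x i) else x i := by
  simp [flipAt', LinearIsometryEquiv.piLpCongrRight_apply, apply_ite
    (fun (F : ℝ ≃ₗᵢ[ℝ] ℝ) => F (x i))]

/-- Swap of two coordinates, as a linear isometry. -/
def swapAt' (k l : Fin m) : Em' m ≃ₗᵢ[ℝ] Em' m :=
  LinearIsometryEquiv.piLpCongrLeft 2 ℝ ℝ (Equiv.swap k l)

lemma swapAt_apply' (k l : Fin m) (x : Em' m) (i : Fin m) :
    (swapAt' k l x) i = x (Equiv.swap k l i) := by
  simp [swapAt', LinearIsometryEquiv.piLpCongrLeft_apply, Equiv.piCongrLeft']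

lemma moment_offdiag' {k l : Fin m} (hkl : k ≠ l) :
    ∫ u : Sm' m, (u : Em' m) k * (u : Em' m) l ∂(σm' m) = 0 := by
  set g : Sm' m → ℝ := fun u => (u : Em' m) k * (u : Em' m) l with hg
  have hgc : Continuous g := ((cont_coord' k).mul (cont_coord' l))
  have key : ∀ u, g (sphereMap' (flipAt' k) u) = - g u := by
    intro u
    simp only [hg, sphereMap', flipAt_apply']
    rw [if_pos trivial, if_neg (Ne.symm hkl)]
    ring
  have h := integral_comp_sphereMap' (flipAt' k) g hgc.aestronglyMeasurable
  rw [show (fun u => g (sphereMap' (flipAt' k) u)) = (fun u => - g u) from funext key] at h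
  rw [integral_neg] at h
  linarith

lemma moment_diag_eq' (k l : Fin m) :
    ∫ u : Sm' m, ((u : Em' m) k) ^ 2 ∂(σm' m) = ∫ u : Sm' m, ((u : Em' m) l) ^ 2 ∂(σm' m) := by
  set g : Sm' m → ℝ := fun u => ((u : Em' m) k) ^ 2 with hg
  have hgc : Continuous g := (cont_coord' k).pow 2
  have key : ∀ u : Sm' m, g (sphereMap' (swapAt' k l) u)
      = ((u : Em' m) (Equiv.swap k l k)) ^ 2 := by
    intro u
    simp only [hg, sphereMap', swapAt_apply']
  have h := integral_comp_sphereMap' (swapAt' k l) g hgc.aestronglyMeasurable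
  rw [show (fun u => g (sphereMap' (swapAt' k l) u)) = (fun u : Sm' m => ((u : Em' m) l) ^ 2) from
    funext fun u => by rw [key u, Equiv.swap_apply_left]] at h
  exact h.symm

lemma sum_sq_coord' (u : Sm' m) : ∑ k, ((u : Em' m) k) ^ 2 = 1 := by
  have h1 : ‖(u : Em' m)‖ = 1 := mem_sphere_zero_iff_norm.1 u.2
  have h2 : ‖(u : Em' m)‖ ^ 2 = ∑ k, ((u : Em' m) k) ^ 2 := by
    rw [EuclideanSpace.norm_eq, Real.sq_sqrt (Finset.sum_nonneg fun i _ => sq_nonneg _)]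
    exact Finset.sum_congr rfl fun i _ => by rw [Real.norm_eq_abs, sq_abs]
  rw [← h2, h1, one_pow]

lemma moment_diag' (hm : 1 ≤ m) (k : Fin m) :
    ∫ u : Sm' m, ((u : Em' m) k) ^ 2 ∂(σm' m) = ((σm' m) univ).toReal / m := by
  have hsum : ∑ l : Fin m, ∫ u : Sm' m, ((u : Em' m) l) ^ 2 ∂(σm' m)
      = ((σm' m) univ).toReal := by
    rw [← integral_finset_sum _ (fun l _ => integrable_cont' (g := fun u : Sm' m => ((u : Em' m) l) ^ 2) ((cont_coord' l).pow 2))]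
    simp only [sum_sq_coord']
    simp [measureReal_def]
  have heq : ∀ l : Fin m, ∫ u : Sm' m, ((u : Em' m) l) ^ 2 ∂(σm' m)
      = ∫ u : Sm' m, ((u : Em' m) k) ^ 2 ∂(σm' m) := fun l => moment_diag_eq' l k
  rw [Finset.sum_congr rfl (fun l _ => heq l), Finset.sum_const, Finset.card_univ,
    Fintype.card_fin, nsmul_eq_mul] at hsum
  have hm' : (m:ℝ) ≠ 0 := Nat.cast_ne_zero.2 (by omega)
  rw [eq_div_iff hm']
  linarith [hsum]

lemma moment' (hm : 1 ≤ m) (k l : Fin m) :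
    ∫ u : Sm' m, (u : Em' m) k * (u : Em' m) l ∂(σm' m)
      = if k = l then ((σm' m) univ).toReal / m else 0 := by
  by_cases h : k = l
  · subst h; rw [if_pos rfl, ← moment_diag' hm k]; congr 1; ext u; ring
  · rw [if_neg h]; exact moment_offdiag' h

lemma apply_eq_sum' (A : Em' m →L[ℝ] Em' p) (x : Em' m) (i : Fin p) :
    (A x) i = ∑ k, (A (EuclideanSpace.single k 1)) i * x k := by
  have hx : x = ∑ k, x k • EuclideanSpace.single k 1 := by
    have h := (EuclideanSpace.basisFun (Fin m) ℝ).sum_repr x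
    simpa [EuclideanSpace.basisFun_apply, EuclideanSpace.basisFun_repr] using h.symm
  conv_lhs => rw [hx]
  rw [map_sum]
  have : ((∑ k, A (x k • EuclideanSpace.single k 1)) : Em' p) i
      = ∑ k, (A (x k • EuclideanSpace.single k 1)) i := by
    rw [WithLp.ofLp_sum]; exact Finset.sum_apply i _ _
  rw [this]
  exact Finset.sum_congr rfl fun k _ => by rw [A.map_smul]; simp [mul_comm]

lemma norm_sq_eq'' (y : Em' p) : ‖y‖ ^ 2 = ∑ i, (y i) ^ 2 := by
  rw [EuclideanSpace.norm_eq, Real.sq_sqrt (Finset.sum_nonneg fun i _ => sq_nonneg _)]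
  exact Finset.sum_congr rfl fun i _ => by rw [Real.norm_eq_abs, sq_abs]

lemma core' (hm : 1 ≤ m) (A : Em' m →L[ℝ] Em' p) :
    ∫ u : Sm' m, ‖A (u : Em' m)‖ ^ 2 ∂(σm' m)
      = ((σm' m) univ).toReal / m * ∑ k, ‖A (EuclideanSpace.single k 1)‖ ^ 2 := by
  set c : Fin p → Fin m → ℝ := fun i k => (A (EuclideanSpace.single k 1)) i with hc
  have step1 : ∀ u : Sm' m, ‖A (u : Em' m)‖ ^ 2
      = ∑ i, ∑ k, ∑ l, (c i k * c i l) * ((u : Em' m) k * (u : Em' m) l) := by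
    intro u
    rw [norm_sq_eq'']
    refine Finset.sum_congr rfl fun i _ => ?_
    rw [apply_eq_sum' A (u : Em' m) i, sq, Finset.sum_mul_sum]
    exact Finset.sum_congr rfl fun k _ => Finset.sum_congr rfl fun l _ => by ring
  have contbase : ∀ (i : Fin p) (k l : Fin m),
      Continuous (fun u : Sm' m => (c i k * c i l) * ((u : Em' m) k * (u : Em' m) l)) :=
    fun i k l => continuous_const.mul ((cont_coord' k).mul (cont_coord' l))
  simp only [step1]
  rw [integral_finset_sum _ (fun i _ => integrable_cont' (continuous_finset_sum _
    fun k _ => continuous_finset_sum _ fun l _ => contbase i k l))]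
  have step2 : ∀ i : Fin p, ∫ u : Sm' m,
      (∑ k, ∑ l, (c i k * c i l) * ((u : Em' m) k * (u : Em' m) l)) ∂(σm' m)
      = ((σm' m) univ).toReal / m * ∑ k, (c i k) ^ 2 := by
    intro i
    rw [integral_finset_sum _ (fun k _ => integrable_cont'
      (continuous_finset_sum _ fun l _ => contbase i k l))]
    have : ∀ k : Fin m, ∫ u : Sm' m,
        (∑ l, (c i k * c i l) * ((u : Em' m) k * (u : Em' m) l)) ∂(σm' m)
        = ((σm' m) univ).toReal / m * (c i k) ^ 2 := by
      intro k
      rw [integral_finset_sum _ (fun l _ => integrable_cont' (contbase i k l))]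
      have : ∀ l : Fin m, ∫ u : Sm' m,
          (c i k * c i l) * ((u : Em' m) k * (u : Em' m) l) ∂(σm' m)
          = (c i k * c i l) * if k = l then ((σm' m) univ).toReal / m else 0 := by
        intro l
        rw [MeasureTheory.integral_const_mul, moment' hm k l]
      simp only [this, mul_ite, mul_zero]
      rw [Finset.sum_ite_eq]
      simp [sq]
      ring
    simp only [this]
    rw [← Finset.mul_sum]
  simp only [step2]
  rw [← Finset.mul_sum]
  congr 1
  rw [Finset.sum_comm]
  exact Finset.sum_congr rfl fun k _ => (norm_sq_eq'' _).symm

lemma entry_adjoint' (B : Em' a →L[ℝ] Em' b) (k : Fin a) (j : Fin b) :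
    (B (EuclideanSpace.single k 1)) j
      = ((ContinuousLinearMap.adjoint B) (EuclideanSpace.single j 1)) k := by
  have h1 : (B (EuclideanSpace.single k 1)) j
      = inner ℝ (B (EuclideanSpace.single k 1)) (EuclideanSpace.single j 1 : Em' b) := by
    rw [EuclideanSpace.inner_single_right]; simp
  have h2 : ((ContinuousLinearMap.adjoint B) (EuclideanSpace.single j 1)) k
      = inner ℝ (EuclideanSpace.single k 1 : Em' a)
          ((ContinuousLinearMap.adjoint B) (EuclideanSpace.single j 1)) := by
    rw [EuclideanSpace.inner_single_left]; simp
  rw [h1, h2, ContinuousLinearMap.adjoint_inner_right]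

lemma frobenius_adjoint' (B : Em' a →L[ℝ] Em' b) :
    ∑ k, ‖B (EuclideanSpace.single k 1)‖ ^ 2
      = ∑ j, ‖(ContinuousLinearMap.adjoint B) (EuclideanSpace.single j 1)‖ ^ 2 := by
  simp only [norm_sq_eq'']
  rw [Finset.sum_comm]
  exact Finset.sum_congr rfl fun j _ => Finset.sum_congr rfl fun k _ => by
    rw [entry_adjoint' B k j]

end
end Aux

/- STATEMENT 11: Let f be a unit-norm polynomial system and ζ a zero of f at which the
restricted derivative L := Df(ζ)|_{ζ^⊥} is invertible; for a tangent direction ḟ ∈ T_f S set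
ζ̇(ḟ) = L⁻¹ ḟ(ζ).  Then the average of ‖ζ̇(ḟ)‖² over ḟ uniform on the unit sphere of T_f S
equals (N - 1/2)⁻¹ ‖L⁻¹‖_F².

Formalization: the Weyl space H_{(d)} ≅ ℂ^N is realized as the real inner product space
H = ℝ^{2N}; evaluation at ζ is a real-linear map ev : H → W ≅ ℂ^n ≅ ℝ^{2n} which kills f
(since f(ζ) = 0) and is a coisometry (its restriction to the orthogonal complement of its
kernel, i.e. to C_ζ, is an isometry onto ℂ^n, as in the paper); Linv represents L⁻¹, and
ζ̇(ḟ) = Linv (ev ḟ).  The tangent space T_f S = f^⊥ (real dimension 2N-1) is realized by a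
linear isometry ι : ℝ^{2N-1} → H with range f^⊥, and the uniform probability measure on its
unit sphere is the normalized `volume.toSphere`.  The complex squared Frobenius norm
‖L⁻¹‖_F² equals half of the real squared Frobenius norm (∑_j ‖Linv e_j‖²)/2. -/
set_option maxHeartbeats 1000000 in
theorem stmt_11 {N n : ℕ} (hN : 1 ≤ N)
    (f : EuclideanSpace ℝ (Fin (2 * N))) (hf : ‖f‖ = 1)
    (ev : EuclideanSpace ℝ (Fin (2 * N)) →L[ℝ] EuclideanSpace ℝ (Fin (2 * n)))
    (hevf : ev f = 0)
    (hco : ev.comp (ContinuousLinearMap.adjoint ev) =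
      ContinuousLinearMap.id ℝ (EuclideanSpace ℝ (Fin (2 * n))))
    (ι : EuclideanSpace ℝ (Fin (2 * N - 1)) →ₗᵢ[ℝ] EuclideanSpace ℝ (Fin (2 * N)))
    (hι : LinearMap.range ι.toLinearMap = (ℝ ∙ f)ᗮ)
    (Linv : EuclideanSpace ℝ (Fin (2 * n)) →L[ℝ] EuclideanSpace ℝ (Fin (2 * n))) :
    (((volume : Measure (EuclideanSpace ℝ (Fin (2 * N - 1)))).toSphere
          Set.univ).toReal)⁻¹ *
        ∫ u, ‖Linv (ev (ι (u : EuclideanSpace ℝ (Fin (2 * N - 1)))))‖ ^ 2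
          ∂((volume : Measure (EuclideanSpace ℝ (Fin (2 * N - 1)))).toSphere) =
      ((N : ℝ) - 1 / 2)⁻¹ *
        ((∑ j, ‖Linv (EuclideanSpace.single j 1)‖ ^ 2) / 2) := by
  classical
  have hm : 1 ≤ 2 * N - 1 := by omega
  set ιC := ι.toContinuousLinearMap with hιC
  set C := ev.comp ιC with hCdef
  set A := Linv.comp C with hAdef
  -- coisometry : C ∘ C† = id
  have hCCt : C.comp (ContinuousLinearMap.adjoint C)
      = ContinuousLinearMap.id ℝ (EuclideanSpace ℝ (Fin (2 * n))) := by
    have hιadj : ∀ x, (ContinuousLinearMap.adjoint ιC) (ιC x) = x := by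
      intro x
      apply ext_inner_right ℝ
      intro y
      rw [ContinuousLinearMap.adjoint_inner_left]
      exact ι.inner_map_map x y
    refine ContinuousLinearMap.ext fun w => ?_
    simp only [hCdef, ContinuousLinearMap.comp_apply, ContinuousLinearMap.id_apply,
      ContinuousLinearMap.adjoint_comp]
    set v := (ContinuousLinearMap.adjoint ev) w with hv
    have hvmem : v ∈ (ℝ ∙ f)ᗮ := by
      rw [Submodule.mem_orthogonal_singleton_iff_inner_right]
      rw [hv, ContinuousLinearMap.adjoint_inner_right, hevf]
      simp
    rw [← hι] at hvmem
    obtain ⟨x, hx⟩ := hvmem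
    have hx' : ιC x = v := hx
    rw [← hx', hιadj, hx']
    have := congrArg (fun (T : EuclideanSpace ℝ (Fin (2*n)) →L[ℝ]
      EuclideanSpace ℝ (Fin (2*n))) => T w) hco
    simpa using this
  have hid : ∀ w : EuclideanSpace ℝ (Fin (2 * n)),
      C ((ContinuousLinearMap.adjoint C) w) = w := by
    intro w
    have := congrArg (fun (T : EuclideanSpace ℝ (Fin (2*n)) →L[ℝ]
      EuclideanSpace ℝ (Fin (2*n))) => T w) hCCt
    simpa using this
  -- C† is an isometry
  have hCiso : ∀ w : EuclideanSpace ℝ (Fin (2 * n)),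
      ‖(ContinuousLinearMap.adjoint C) w‖ = ‖w‖ := by
    intro w
    have h1 : (inner ℝ ((ContinuousLinearMap.adjoint C) w)
        ((ContinuousLinearMap.adjoint C) w) : ℝ) = inner ℝ w w := by
      rw [ContinuousLinearMap.adjoint_inner_left, hid w]
    have h2 := congrArg Real.sqrt h1
    rwa [real_inner_self_eq_norm_mul_norm, real_inner_self_eq_norm_mul_norm,
      Real.sqrt_mul_self (norm_nonneg _), Real.sqrt_mul_self (norm_nonneg _)] at h2
  -- Frobenius transfer
  have hsum : ∑ k : Fin (2 * N - 1), ‖A (EuclideanSpace.single k 1)‖ ^ 2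
      = ∑ j : Fin (2 * n), ‖Linv (EuclideanSpace.single j 1)‖ ^ 2 := by
    rw [frobenius_adjoint' A]
    have hAadj : ContinuousLinearMap.adjoint A
        = (ContinuousLinearMap.adjoint C).comp (ContinuousLinearMap.adjoint Linv) := by
      rw [hAdef, ContinuousLinearMap.adjoint_comp]
    have step : ∀ j : Fin (2 * n), ‖(ContinuousLinearMap.adjoint A)
        (EuclideanSpace.single j 1)‖ ^ 2
        = ‖(ContinuousLinearMap.adjoint Linv) (EuclideanSpace.single j 1)‖ ^ 2 := by
      intro j
      rw [hAadj, ContinuousLinearMap.comp_apply, hCiso]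
    rw [Finset.sum_congr rfl fun j _ => step j]
    rw [frobenius_adjoint' (ContinuousLinearMap.adjoint Linv),
      ContinuousLinearMap.adjoint_adjoint]
  -- the core integral computation
  have hcore : ∫ u : Metric.sphere (0 : EuclideanSpace ℝ (Fin (2 * N - 1))) 1,
        ‖Linv (ev (ι (u : EuclideanSpace ℝ (Fin (2 * N - 1)))))‖ ^ 2
        ∂((volume : Measure (EuclideanSpace ℝ (Fin (2 * N - 1)))).toSphere)
      = (((volume : Measure (EuclideanSpace ℝ (Fin (2 * N - 1)))).toSphere
            Set.univ).toReal) / (2 * N - 1 : ℕ)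
          * ∑ k, ‖A (EuclideanSpace.single k 1)‖ ^ 2 :=
    core' hm A
  -- totals
  have htot0 : ((volume : Measure (EuclideanSpace ℝ (Fin (2 * N - 1)))).toSphere
      Set.univ) ≠ 0 := by
    rw [Measure.toSphere_apply_univ]
    refine mul_ne_zero ?_ ((Metric.measure_ball_pos _ _ one_pos).ne')
    simp only [finrank_euclideanSpace_fin]
    exact_mod_cast Nat.cast_ne_zero.2 (by omega : 2 * N - 1 ≠ 0)
  have htop : ((volume : Measure (EuclideanSpace ℝ (Fin (2 * N - 1)))).toSphere
      Set.univ) ≠ ⊤ := measure_ne_top _ _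
  have htot : (((volume : Measure (EuclideanSpace ℝ (Fin (2 * N - 1)))).toSphere
      Set.univ)).toReal ≠ 0 := ENNReal.toReal_ne_zero.2 ⟨htot0, htop⟩
  rw [hcore, hsum]
  have hcast : ((2 * N - 1 : ℕ) : ℝ) = 2 * (N : ℝ) - 1 := by
    have h1 : (1 : ℕ) ≤ 2 * N := by omega
    push_cast [Nat.cast_sub h1]
    ring
  rw [hcast]
  have hNhalf : (N : ℝ) - 1 / 2 ≠ 0 := by
    have : (1 : ℝ) ≤ (N : ℝ) := by exact_mod_cast hN
    intro h; nlinarith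
  have h2N : (2 * (N : ℝ) - 1) ≠ 0 := by
    intro h
    apply hNhalf
    linarith
  generalize ((volume : Measure (EuclideanSpace ℝ (Fin (2 * N - 1)))).toSphere
      Set.univ).toReal = t at htot ⊢
  set S := ∑ j : Fin (2 * n), ‖Linv (EuclideanSpace.single j 1)‖ ^ 2 with hSdef
  have e1 : t⁻¹ * (t / (2*(N:ℝ)-1) * (S/2*2)) = (t⁻¹ * t) * (S / (2*(N:ℝ)-1)) := by ring
  rw [show t / (2*(N:ℝ)-1) * S = t / (2*(N:ℝ)-1) * (S/2*2) by ring, e1,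
    inv_mul_cancel₀ htot, one_mul, eq_comm, inv_mul_eq_div, div_eq_div_iff hNhalf h2N]
  ring
end
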